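/- Let m, n ≥ 1, let C be a real symmetric m×m matrix and let S and H be real symmetric n×n matrices. Then λmax(C ⊗ H + I_m ⊗ S) = max over the eigenvalues μ of C of λmax(S + μ·H), where ⊗ denotes the Kronecker product and I_m is the m×m identity matrix. That is, λmax(C ⊗ H + I_m ⊗ S) ≥ λmax(S + μ·H) for every eigenvalue μ of C, and equality λmax(C ⊗ H + I_m ⊗ S) = λmax(S + μ·H) holds for some eigenvalue μ of C. -/

import Mathlib

open Matrix
open scoped Kronecker

/-- The largest eigenvalue of a real matrix, as the supremum of its (real) spectrum. -/
noncomputable def lamMax {n : Type*} [Fintype n] [DecidableEq n] (M : Matrix n n ℝ) : ℝ :=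
  sSup (spectrum ℝ M)


lemma memSpecIff {ι : Type*} [Fintype ι] [DecidableEq ι] (M : Matrix ι ι ℝ) (μ : ℝ) :
    μ ∈ spectrum ℝ M ↔ ∃ v, v ≠ 0 ∧ M *ᵥ v = μ • v := by
  rw [spectrum.mem_iff, Matrix.isUnit_iff_isUnit_det, isUnit_iff_ne_zero, not_not,
    ← Matrix.exists_mulVec_eq_zero_iff]
  apply exists_congr; intro v
  rw [Algebra.algebraMap_eq_smul_one, Matrix.sub_mulVec, Matrix.smul_mulVec,
    Matrix.one_mulVec, sub_eq_zero, eq_comm (a := μ • v)]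

lemma kronEig {m n : ℕ} (C : Matrix (Fin m) (Fin m) ℝ) (S H : Matrix (Fin n) (Fin n) ℝ)
    (μ lam : ℝ) (w : Fin m → ℝ) (v : Fin n → ℝ)
    (hw : C *ᵥ w = μ • w) (hv : (S + μ • H) *ᵥ v = lam • v) :
    (C ⊗ₖ H + (1 : Matrix (Fin m) (Fin m) ℝ) ⊗ₖ S) *ᵥ (fun p => w p.1 * v p.2)
      = lam • (fun p => w p.1 * v p.2) := by
  funext p
  obtain ⟨i, j⟩ := p
  have e1 : ∑ k, C i k * w k = μ * w i := by
    have := congrFun hw i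
    simpa [mulVec, dotProduct] using this
  have e2 : (∑ l, S j l * v l) + μ * ∑ l, H j l * v l = lam * v j := by
    have := congrFun hv j
    simp only [mulVec, dotProduct, Matrix.add_apply, Matrix.smul_apply, Pi.smul_apply, smul_eq_mul] at this
    rw [Finset.mul_sum, ← Finset.sum_add_distrib, ← this]
    apply Finset.sum_congr rfl; intro l _; ring
  simp only [mulVec, dotProduct, Matrix.add_apply, kroneckerMap_apply, one_apply, Pi.smul_apply,
    smul_eq_mul, Fintype.sum_prod_type]
  have key : ∀ k, ∀ l : Fin n, (C i k * H j l + (if i = k then 1 else 0) * S j l) * (w k * v l)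
      = (C i k * w k) * (H j l * v l) + (if i = k then S j l * v l * w k else 0) := by
    intro k l; split <;> ring
  simp_rw [key, Finset.sum_add_distrib, Finset.sum_ite_irrel, Finset.sum_const_zero,
    Finset.sum_ite_eq, Finset.mem_univ, if_true, ← Finset.sum_mul_sum, ← Finset.sum_mul]
  linear_combination (∑ l, H j l * v l) * e1 + w i * e2

lemma diagExtract {m n : ℕ} (d : Fin m → ℝ) (S H : Matrix (Fin n) (Fin n) ℝ) (lam : ℝ)
    (u : Fin m × Fin n → ℝ) (hu : u ≠ 0)
    (h : (diagonal d ⊗ₖ H + (1 : Matrix (Fin m) (Fin m) ℝ) ⊗ₖ S) *ᵥ u = lam • u) :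
    ∃ i, (fun j => u (i, j)) ≠ 0 ∧
      (S + d i • H) *ᵥ (fun j => u (i, j)) = lam • (fun j => u (i, j)) := by
  have ⟨p, hp⟩ : ∃ p, u p ≠ 0 := by
    by_contra hc; push_neg at hc; exact hu (funext hc)
  refine ⟨p.1, fun h0 => hp ?_, ?_⟩
  · exact congrFun h0 p.2
  funext j
  have hj := congrFun h (p.1, j)
  simp only [mulVec, dotProduct, Matrix.add_apply, kroneckerMap_apply, one_apply, Pi.smul_apply,
    smul_eq_mul, Fintype.sum_prod_type] at hj ⊢
  have key : ∀ k, ∀ l : Fin n,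
      (diagonal d p.1 k * H j l + (if p.1 = k then 1 else 0) * S j l) * u (k, l)
      = if p.1 = k then (S j l + d p.1 * H j l) * u (k, l) else 0 := by
    intro k l
    rw [diagonal_apply]
    split
    · ring
    · simp
  simp_rw [key, Finset.sum_ite_irrel, Finset.sum_const_zero, Finset.sum_ite_eq,
    Finset.mem_univ, if_true] at hj
  rw [← hj]
  apply Finset.sum_congr rfl
  intro l _
  simp [Matrix.add_apply, Matrix.smul_apply]

theorem lamMax_kronecker_eq_max_over_spectrum'
    {m n : ℕ} (hm : 1 ≤ m) (hn : 1 ≤ n)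
    (C : Matrix (Fin m) (Fin m) ℝ) (S H : Matrix (Fin n) (Fin n) ℝ)
    (hC : C.IsSymm) (hS : S.IsSymm) (hH : H.IsSymm) :
    (∀ μ ∈ spectrum ℝ C,
        sSup (spectrum ℝ (S + μ • H)) ≤
          sSup (spectrum ℝ (C ⊗ₖ H + (1 : Matrix (Fin m) (Fin m) ℝ) ⊗ₖ S))) ∧
      (∃ μ ∈ spectrum ℝ C,
        sSup (spectrum ℝ (C ⊗ₖ H + (1 : Matrix (Fin m) (Fin m) ℝ) ⊗ₖ S))
          = sSup (spectrum ℝ (S + μ • H))) := by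
  set K := C ⊗ₖ H + (1 : Matrix (Fin m) (Fin m) ℝ) ⊗ₖ S with hK
  -- Hermitian facts
  have hCh : C.IsHermitian := by
    rwa [IsHermitian, conjTranspose_eq_transpose_of_trivial]
  have hSym : ∀ μ : ℝ, (S + μ • H).IsHermitian := fun μ => by
    rw [IsHermitian, conjTranspose_eq_transpose_of_trivial]
    exact hS.add (hH.smul μ)
  set d := hCh.eigenvalues with hd
  set U := (hCh.eigenvectorUnitary : Matrix (Fin m) (Fin m) ℝ) with hU
  have hUU : U * star U = 1 := mem_unitaryGroup_iff.mp hCh.eigenvectorUnitary.2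
  have hUU' : star U * U = 1 := mem_unitaryGroup_iff'.mp hCh.eigenvectorUnitary.2
  have hCdiag : C = U * diagonal d * star U := by
    have := hCh.spectral_theorem
    simpa using this
  -- the conjugating unit
  set uu : (Matrix (Fin m × Fin n) (Fin m × Fin n) ℝ)ˣ :=
    ⟨U ⊗ₖ (1 : Matrix (Fin n) (Fin n) ℝ), star U ⊗ₖ 1,
      by rw [← mul_kronecker_mul, hUU, one_mul, one_kronecker_one],
      by rw [← mul_kronecker_mul, hUU', one_mul, one_kronecker_one]⟩ with huu
  have hconj : K = (uu : Matrix (Fin m × Fin n) (Fin m × Fin n) ℝ)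
      * (diagonal d ⊗ₖ H + (1 : Matrix (Fin m) (Fin m) ℝ) ⊗ₖ S)
      * ((uu⁻¹ : (Matrix (Fin m × Fin n) (Fin m × Fin n) ℝ)ˣ) : Matrix (Fin m × Fin n) (Fin m × Fin n) ℝ) := by
    show K = (U ⊗ₖ 1) * (diagonal d ⊗ₖ H + 1 ⊗ₖ S) * (star U ⊗ₖ 1)
    rw [mul_add, add_mul, ← mul_kronecker_mul, ← mul_kronecker_mul,
      ← mul_kronecker_mul, ← mul_kronecker_mul, one_mul, mul_one, one_mul, mul_one, hUU,
      ← hCdiag, hK, Matrix.mul_one]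
  have hspec : spectrum ℝ K = ⋃ i, spectrum ℝ (S + d i • H) := by
    rw [hconj, spectrum.units_conjugate]
    ext lam
    simp only [Set.mem_iUnion]
    constructor
    · intro hl
      rw [memSpecIff] at hl
      obtain ⟨v, hv0, hv⟩ := hl
      obtain ⟨i, h0, h⟩ := diagExtract d S H lam v hv0 hv
      exact ⟨i, (memSpecIff _ _).2 ⟨_, h0, h⟩⟩
    · rintro ⟨i, hl⟩
      rw [memSpecIff] at hl ⊢
      obtain ⟨v, hv0, hv⟩ := hl
      have hw : diagonal d *ᵥ (Pi.single i 1 : Fin m → ℝ) = d i • (Pi.single i 1 : Fin m → ℝ) := by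
        funext k
        rcases eq_or_ne k i with rfl | hki
        · simp [diagonal_mulVec_single]
        · simp [diagonal_mulVec_single, Pi.single_apply, hki]
      obtain ⟨j0, hj0⟩ : ∃ j0, v j0 ≠ 0 := by
        by_contra hc; push_neg at hc; exact hv0 (funext hc)
      refine ⟨fun p => (Pi.single i 1 : Fin m → ℝ) p.1 * v p.2, ?_, kronEig _ _ _ _ _ _ _ hw hv⟩
      intro h0
      have := congrFun h0 (i, j0)
      simp [Pi.single_apply] at this
      exact hj0 this
  -- basic set facts
  have hfin : ∀ μ : ℝ, (spectrum ℝ (S + μ • H)).Finite := fun μ => Matrix.finite_spectrum _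
  have hne : ∀ μ : ℝ, (spectrum ℝ (S + μ • H)).Nonempty := fun μ =>
    ⟨(hSym μ).eigenvalues ⟨0, hn⟩, (hSym μ).eigenvalues_mem_spectrum_real _⟩
  have hKfin : (spectrum ℝ K).Finite := Matrix.finite_spectrum _
  constructor
  · intro μ hμ
    obtain ⟨w, hw0, hw⟩ := (memSpecIff C μ).1 hμ
    have hmem : sSup (spectrum ℝ (S + μ • H)) ∈ spectrum ℝ (S + μ • H) :=
      Set.Nonempty.csSup_mem (hne μ) (hfin μ)
    obtain ⟨v, hv0, hv⟩ := (memSpecIff _ _).1 hmem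
    obtain ⟨i0, hi0⟩ : ∃ i0, w i0 ≠ 0 := by
      by_contra hc; push_neg at hc; exact hw0 (funext hc)
    obtain ⟨j0, hj0⟩ : ∃ j0, v j0 ≠ 0 := by
      by_contra hc; push_neg at hc; exact hv0 (funext hc)
    have hmemK : sSup (spectrum ℝ (S + μ • H)) ∈ spectrum ℝ K := by
      refine (memSpecIff _ _).2 ⟨fun p => w p.1 * v p.2, ?_, kronEig _ _ _ _ _ _ _ hw hv⟩
      intro h0
      exact mul_ne_zero hi0 hj0 (congrFun h0 (i0, j0))
    exact le_csSup hKfin.bddAbove hmemK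
  · have hUne : (⋃ i, spectrum ℝ (S + d i • H)).Nonempty :=
      ⟨_, Set.mem_iUnion.2 ⟨⟨0, hm⟩, (hne (d ⟨0, hm⟩)).some_mem⟩⟩
    have hUfin : (⋃ i, spectrum ℝ (S + d i • H)).Finite :=
      Set.finite_iUnion fun i => hfin (d i)
    have hKne : (spectrum ℝ K).Nonempty := by rw [hspec]; exact hUne
    have hmem : sSup (spectrum ℝ K) ∈ ⋃ i, spectrum ℝ (S + d i • H) := by
      rw [← hspec]
      exact Set.Nonempty.csSup_mem hKne hKfin
    obtain ⟨i, hi⟩ := Set.mem_iUnion.1 hmem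
    refine ⟨d i, hCh.eigenvalues_mem_spectrum_real i,
      le_antisymm (le_csSup (hfin (d i)).bddAbove hi) ?_⟩
    rw [hspec]
    exact csSup_le_csSup hUfin.bddAbove (hne (d i))
      (Set.subset_iUnion (fun i => spectrum ℝ (S + d i • H)) i)

/-- For `m, n ≥ 1`, a real symmetric `m × m` matrix `C` and real symmetric
`n × n` matrices `S` and `H`, the largest eigenvalue of `C ⊗ H + I_m ⊗ S` equals the maximum
over the eigenvalues `μ` of `C` of `λmax (S + μ • H)`: it is an upper bound for all such
values, and it is attained at some eigenvalue `μ` of `C`. -/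
theorem lamMax_kronecker_eq_max_over_spectrum
    {m n : ℕ} (hm : 1 ≤ m) (hn : 1 ≤ n)
    (C : Matrix (Fin m) (Fin m) ℝ) (S H : Matrix (Fin n) (Fin n) ℝ)
    (hC : C.IsSymm) (hS : S.IsSymm) (hH : H.IsSymm) :
    (∀ μ ∈ spectrum ℝ C,
        lamMax (S + μ • H) ≤ lamMax (C ⊗ₖ H + (1 : Matrix (Fin m) (Fin m) ℝ) ⊗ₖ S)) ∧
      (∃ μ ∈ spectrum ℝ C,
        lamMax (C ⊗ₖ H + (1 : Matrix (Fin m) (Fin m) ℝ) ⊗ₖ S) = lamMax (S + μ • H)) := by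
  simpa only [lamMax] using
    lamMax_kronecker_eq_max_over_spectrum' hm hn C S H hC hS hH
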